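/- Let A, B be real numbers with 3 < A < B, and let a_0 be an integer with a_0 > (A+1)(A−1)^{-1}(B−A)^{-1}. Fix an integer a_1 with a_0·A + (A−1)^{-1} < a_1 < a_0·B − (A−1)^{-1}, fix f : ℤ⁺ → {0,1}, and define a_{n+1} = ⌊a_n²/a_{n−1}⌋ + f(n) for n ≥ 1. Then α = lim a_{n+1}/a_n exists, lies in [A, B], λ = lim a_n·α^{−n} exists and is positive, and |a_n − λα^n| ≤ (A−1)^{-1}(α−1)^{-1} for all n ≥ 0; in particular ‖λα^n‖ ≤ (A−1)^{-1}(α−1)^{-1} for all n ≥ 0. -/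

import Mathlib

set_option maxHeartbeats 1000000


open Filter

/-- For a real number `x`, the distance from `x` to the nearest integer. -/
noncomputable def distNearestInt (x : ℝ) : ℝ := |x - round x|

private lemma boyd_geom_aux {r : ℝ} (h0 : 0 ≤ r) (h1 : r < 1) (n : ℕ) :
    ∑ k ∈ Finset.range n, r ^ k ≤ (1 - r)⁻¹ := by
  have h : (0:ℝ) < 1 - r := by linarith
  have hpow : (0:ℝ) ≤ r ^ n := pow_nonneg h0 n
  rw [geom_sum_eq (ne_of_lt h1), div_le_iff_of_neg (by linarith : r - 1 < 0)]
  have e : (1 - r)⁻¹ * (r - 1) = -1 := by field_simp; ring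
  rw [e]; linarith

theorem boyd_badly_distributed_powers
    (A B : ℝ) (hA : 3 < A) (hAB : A < B)
    (a : ℕ → ℤ)
    (ha0 : (A + 1) * (A - 1)⁻¹ * (B - A)⁻¹ < (a 0 : ℝ))
    (ha1 : (a 0 : ℝ) * A + (A - 1)⁻¹ < (a 1 : ℝ) ∧ (a 1 : ℝ) < (a 0 : ℝ) * B - (A - 1)⁻¹)
    (f : ℕ → ℤ) (hf : ∀ n : ℕ, 1 ≤ n → f n = 0 ∨ f n = 1)
    (hrec : ∀ n : ℕ, 1 ≤ n → a (n + 1) = ⌊(a n : ℝ) ^ 2 / (a (n - 1) : ℝ)⌋ + f n) :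
    ∃ α lam : ℝ,
      Tendsto (fun n : ℕ => (a (n + 1) : ℝ) / (a n : ℝ)) atTop (nhds α) ∧
      A ≤ α ∧ α ≤ B ∧
      0 < lam ∧
      Tendsto (fun n : ℕ => (a n : ℝ) * α ^ (-(n : ℤ))) atTop (nhds lam) ∧
      ∀ n : ℕ, |(a n : ℝ) - lam * α ^ n| ≤ (A - 1)⁻¹ * (α - 1)⁻¹ ∧
        distNearestInt (lam * α ^ n) ≤ (A - 1)⁻¹ * (α - 1)⁻¹ := by
  set c : ℝ := (A - 1)⁻¹ with hc
  have hA1 : (1:ℝ) < A := by linarith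
  have hA0 : (0:ℝ) < A := by linarith
  have hAsub : (0:ℝ) < A - 1 := by linarith
  have hc0 : 0 < c := inv_pos.mpr hAsub
  have hBA : (0:ℝ) < B - A := by linarith
  have ha0pos : (0:ℝ) < (a 0 : ℝ) := lt_trans (by positivity) ha0
  have ha0one : (1:ℝ) ≤ (a 0 : ℝ) := by
    have : (0:ℤ) < a 0 := by exact_mod_cast ha0pos
    exact_mod_cast this
  have hinvA0 : (0:ℝ) ≤ A⁻¹ := by positivity
  have hinvA1 : A⁻¹ < 1 := inv_lt_one_of_one_lt₀ hA1
  have h1A : (1 - A⁻¹)⁻¹ = A * (A - 1)⁻¹ := by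
    rw [show (1 : ℝ) - A⁻¹ = (A - 1) / A by field_simp, inv_div]
    ring
  -- D n = sum of 1/a_k for k = 1..n
  set D : ℕ → ℝ := fun n => ∑ k ∈ Finset.range n, ((a (k + 1) : ℝ))⁻¹ with hD
  -- geometric bound on D
  have hDle : ∀ n : ℕ, (∀ k, k < n → (a 0 : ℝ) * A ^ (k + 1) ≤ (a (k + 1) : ℝ)) →
      D n ≤ c / (a 0 : ℝ) := by
    intro n h
    have hsum : D n ≤ ∑ k ∈ Finset.range n, ((a 0 : ℝ))⁻¹ * (A⁻¹) ^ (k + 1) := by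
      apply Finset.sum_le_sum
      intro k hk
      have hk' := h k (Finset.mem_range.mp hk)
      have hpos : (0:ℝ) < (a 0 : ℝ) * A ^ (k + 1) := by positivity
      calc ((a (k + 1) : ℝ))⁻¹ ≤ ((a 0 : ℝ) * A ^ (k + 1))⁻¹ := by
            exact inv_anti₀ hpos hk'
        _ = ((a 0 : ℝ))⁻¹ * (A⁻¹) ^ (k + 1) := by rw [mul_inv, inv_pow]
    have hgeom : ∑ k ∈ Finset.range n, ((a 0 : ℝ))⁻¹ * (A⁻¹) ^ (k + 1)
        = ((a 0 : ℝ))⁻¹ * A⁻¹ * ∑ k ∈ Finset.range n, (A⁻¹) ^ k := by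
      rw [Finset.mul_sum]
      apply Finset.sum_congr rfl
      intro k _
      rw [pow_succ]
      ring
    have hgs := boyd_geom_aux hinvA0 hinvA1 n
    calc D n ≤ ((a 0 : ℝ))⁻¹ * A⁻¹ * ∑ k ∈ Finset.range n, (A⁻¹) ^ k := by
          rw [← hgeom]; exact hsum
      _ ≤ ((a 0 : ℝ))⁻¹ * A⁻¹ * (1 - A⁻¹)⁻¹ :=
          mul_le_mul_of_nonneg_left hgs (by positivity)
      _ = c / (a 0 : ℝ) := by
          rw [h1A, hc]; field_simp
  -- main induction
  have key : ∀ n : ℕ, (a 0 : ℝ) * A ^ n ≤ (a n : ℝ) ∧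
      (A + c / (a 0 : ℝ) - D n) * (a n : ℝ) < (a (n + 1) : ℝ) ∧
      (a (n + 1) : ℝ) < (B - c / (a 0 : ℝ) + D n) * (a n : ℝ) := by
    intro n
    induction n using Nat.strong_induction_on with
    | _ n ih =>
      match n with
      | 0 =>
        have hD0 : D 0 = 0 := by simp [hD]
        refine ⟨by simp, ?_, ?_⟩
        · rw [hD0]
          have e : (A + c / (a 0 : ℝ) - 0) * (a 0 : ℝ) = (a 0 : ℝ) * A + c := by
            field_simp; ring
          rw [e]; exact ha1.1
        · rw [hD0]
          have e : (B - c / (a 0 : ℝ) + 0) * (a 0 : ℝ) = (a 0 : ℝ) * B - c := by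
            field_simp; ring
          rw [e]; exact ha1.2
      | Nat.succ m =>
        have ihm := ih m (Nat.lt_succ_self m)
        have hDm : D m ≤ c / (a 0 : ℝ) := by
          apply hDle
          intro k hk
          exact (ih (k + 1) (by omega)).1
        have ham_pos : (0:ℝ) < (a m : ℝ) := lt_of_lt_of_le (by positivity) ihm.1
        have hfirst : (a 0 : ℝ) * A ^ (m + 1) ≤ (a (m + 1) : ℝ) := by
          have h2 := ihm.2.1
          have hAm : A * (a m : ℝ) ≤ (a (m + 1) : ℝ) := by nlinarith
          calc (a 0 : ℝ) * A ^ (m + 1) = A * ((a 0 : ℝ) * A ^ m) := by ring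
            _ ≤ A * (a m : ℝ) := by nlinarith [ihm.1]
            _ ≤ (a (m + 1) : ℝ) := hAm
        have ham1_pos : (0:ℝ) < (a (m + 1) : ℝ) := lt_of_lt_of_le (by positivity) hfirst
        have hx := hrec (m + 1) (by omega)
        simp only [Nat.add_sub_cancel] at hx
        have hxa : (a (m + 1 + 1) : ℝ)
            = ((⌊(a (m + 1) : ℝ) ^ 2 / (a m : ℝ)⌋ : ℤ) : ℝ) + (f (m + 1) : ℝ) := by
          rw [hx]; push_cast; ring
        have hfl1 := Int.floor_le ((a (m + 1) : ℝ) ^ 2 / (a m : ℝ))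
        have hfl2 := Int.sub_one_lt_floor ((a (m + 1) : ℝ) ^ 2 / (a m : ℝ))
        have hfb : (0:ℝ) ≤ (f (m + 1) : ℝ) ∧ (f (m + 1) : ℝ) ≤ 1 := by
          rcases hf (m + 1) (by omega) with h | h <;> simp [h]
        have hup : (a (m + 1 + 1) : ℝ) ≤ (a (m + 1) : ℝ) ^ 2 / (a m : ℝ) + 1 := by
          rw [hxa]; linarith [hfb.1, hfb.2]
        have hlo' : (a (m + 1) : ℝ) ^ 2 / (a m : ℝ) - 1 < (a (m + 1 + 1) : ℝ) := by
          rw [hxa]; linarith [hfb.1, hfb.2]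
        have hxlo : (A + c / (a 0 : ℝ) - D m) * (a (m + 1) : ℝ)
            < (a (m + 1) : ℝ) ^ 2 / (a m : ℝ) := by
          rw [lt_div_iff₀ ham_pos]
          nlinarith [mul_lt_mul_of_pos_right ihm.2.1 ham1_pos]
        have hxhi : (a (m + 1) : ℝ) ^ 2 / (a m : ℝ)
            < (B - c / (a 0 : ℝ) + D m) * (a (m + 1) : ℝ) := by
          rw [div_lt_iff₀ ham_pos]
          nlinarith [mul_lt_mul_of_pos_right ihm.2.2 ham1_pos]
        have hDsucc : D (m + 1) = D m + ((a (m + 1) : ℝ))⁻¹ := by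
          simp [hD, Finset.sum_range_succ]
        refine ⟨hfirst, ?_, ?_⟩
        · rw [hDsucc]
          have e : (A + c / (a 0 : ℝ) - (D m + ((a (m + 1) : ℝ))⁻¹)) * (a (m + 1) : ℝ)
              = (A + c / (a 0 : ℝ) - D m) * (a (m + 1) : ℝ) - 1 := by
            field_simp
            ring
          rw [e]; linarith
        · rw [hDsucc]
          have e : (B - c / (a 0 : ℝ) + (D m + ((a (m + 1) : ℝ))⁻¹)) * (a (m + 1) : ℝ)
              = (B - c / (a 0 : ℝ) + D m) * (a (m + 1) : ℝ) + 1 := by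
            field_simp
            ring
          rw [e]; linarith
  have pos : ∀ n, (0:ℝ) < (a n : ℝ) := fun n => lt_of_lt_of_le (by positivity) (key n).1
  have hDall : ∀ n, D n ≤ c / (a 0 : ℝ) := fun n => hDle n fun k _ => (key (k + 1)).1
  have ratio : ∀ n, A * (a n : ℝ) < (a (n + 1) : ℝ) := by
    intro n
    have h := (key n).2.1
    nlinarith [hDall n, pos n]
  have ratioB : ∀ n, (a (n + 1) : ℝ) < B * (a n : ℝ) := by
    intro n
    have h := (key n).2.2
    nlinarith [hDall n, pos n]
  have grow : ∀ k j, (a k : ℝ) * A ^ j ≤ (a (k + j) : ℝ) := by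
    intro k j
    induction j with
    | zero => simp
    | succ j ihj =>
      calc (a k : ℝ) * A ^ (j + 1) = A * ((a k : ℝ) * A ^ j) := by ring
        _ ≤ A * (a (k + j) : ℝ) := by nlinarith
        _ ≤ (a (k + j + 1) : ℝ) := le_of_lt (ratio (k + j))
  have hstep : ∀ j, |(a (j + 2) : ℝ) - (a (j + 1) : ℝ) ^ 2 / (a j : ℝ)| ≤ 1 := by
    intro j
    have hx := hrec (j + 1) (by omega)
    simp only [Nat.add_sub_cancel] at hx
    have hxa : (a (j + 2) : ℝ)
        = ((⌊(a (j + 1) : ℝ) ^ 2 / (a j : ℝ)⌋ : ℤ) : ℝ) + (f (j + 1) : ℝ) := by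
      rw [show j + 2 = j + 1 + 1 from rfl, hx]; push_cast; ring
    have hfl1 := Int.floor_le ((a (j + 1) : ℝ) ^ 2 / (a j : ℝ))
    have hfl2 := Int.sub_one_lt_floor ((a (j + 1) : ℝ) ^ 2 / (a j : ℝ))
    have hfb : (0:ℝ) ≤ (f (j + 1) : ℝ) ∧ (f (j + 1) : ℝ) ≤ 1 := by
      rcases hf (j + 1) (by omega) with h | h <;> simp [h]
    rw [hxa, abs_le]
    constructor <;> linarith [hfb.1, hfb.2]
  have hrdiff : ∀ j, |(a (j + 2) : ℝ) / (a (j + 1) : ℝ) - (a (j + 1) : ℝ) / (a j : ℝ)|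
      ≤ ((a (j + 1) : ℝ))⁻¹ := by
    intro j
    have e : (a (j + 2) : ℝ) / (a (j + 1) : ℝ) - (a (j + 1) : ℝ) / (a j : ℝ)
        = ((a (j + 2) : ℝ) - (a (j + 1) : ℝ) ^ 2 / (a j : ℝ)) / (a (j + 1) : ℝ) := by
      field_simp [ne_of_gt (pos j), ne_of_gt (pos (j + 1))]
    rw [e, abs_div, abs_of_pos (pos (j + 1)), div_le_iff₀ (pos (j + 1)),
      inv_mul_cancel₀ (ne_of_gt (pos (j + 1)))]
    exact hstep j
  -- the ratio sequence is Cauchy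
  have hgeo : ∀ n : ℕ, dist ((a (n + 1) : ℝ) / (a n : ℝ))
      ((a (n + 1 + 1) : ℝ) / (a (n + 1) : ℝ))
      ≤ ((a 1 : ℝ))⁻¹ * (A⁻¹) ^ n := by
    intro n
    rw [dist_comm, Real.dist_eq]
    have h2 : (a 1 : ℝ) * A ^ n ≤ (a (n + 1) : ℝ) := by
      have := grow 1 n
      rwa [show 1 + n = n + 1 by omega] at this
    have h3 : ((a (n + 1) : ℝ))⁻¹ ≤ ((a 1 : ℝ) * A ^ n)⁻¹ :=
      inv_anti₀ (mul_pos (pos 1) (pow_pos hA0 n)) h2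
    calc |(a (n + 1 + 1) : ℝ) / (a (n + 1) : ℝ) - (a (n + 1) : ℝ) / (a n : ℝ)|
        ≤ ((a (n + 1) : ℝ))⁻¹ := hrdiff n
      _ ≤ ((a 1 : ℝ) * A ^ n)⁻¹ := h3
      _ = ((a 1 : ℝ))⁻¹ * (A⁻¹) ^ n := by rw [mul_inv, inv_pow]
  have hcauchy : CauchySeq (fun n : ℕ => (a (n + 1) : ℝ) / (a n : ℝ)) :=
    cauchySeq_of_le_geometric _ _ hinvA1 hgeo
  obtain ⟨α, hα⟩ := cauchySeq_tendsto_of_complete hcauchy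
  have hαA : A ≤ α := by
    apply ge_of_tendsto' hα
    intro n
    rw [le_div_iff₀ (pos n)]
    nlinarith [ratio n]
  have hαB : α ≤ B := by
    apply le_of_tendsto' hα
    intro n
    rw [div_le_iff₀ (pos n)]
    nlinarith [ratioB n]
  have hα1 : (1:ℝ) < α := by linarith
  have hαpos : (0:ℝ) < α := by linarith
  have hαsub : (0:ℝ) < α - 1 := by linarith
  -- distance of each ratio from the limit
  have hrk : ∀ k, |(a (k + 1) : ℝ) / (a k : ℝ) - α|
      ≤ ((a (k + 1) : ℝ))⁻¹ * (A * (A - 1)⁻¹) := by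
    intro k
    have htend : Tendsto (fun j : ℕ => (a (j + k + 1) : ℝ) / (a (j + k) : ℝ)) atTop (nhds α) :=
      hα.comp (tendsto_add_atTop_nat k)
    have hu : ∀ j : ℕ, dist ((a (j + k + 1) : ℝ) / (a (j + k) : ℝ))
        ((a (j + 1 + k + 1) : ℝ) / (a (j + 1 + k) : ℝ))
        ≤ ((a (k + 1) : ℝ))⁻¹ * (A⁻¹) ^ j := by
      intro j
      rw [dist_comm, Real.dist_eq]
      have h2 : (a (k + 1) : ℝ) * A ^ j ≤ (a (j + k + 1) : ℝ) := by
        have := grow (k + 1) j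
        rwa [show k + 1 + j = j + k + 1 by omega] at this
      have h3 : ((a (j + k + 1) : ℝ))⁻¹ ≤ ((a (k + 1) : ℝ) * A ^ j)⁻¹ :=
        inv_anti₀ (mul_pos (pos (k + 1)) (pow_pos hA0 j)) h2
      calc |(a (j + 1 + k + 1) : ℝ) / (a (j + 1 + k) : ℝ) - (a (j + k + 1) : ℝ) / (a (j + k) : ℝ)|
          = |(a (j + k + 2) : ℝ) / (a (j + k + 1) : ℝ) - (a (j + k + 1) : ℝ) / (a (j + k) : ℝ)| := by
            rw [show j + 1 + k + 1 = j + k + 2 by omega, show j + 1 + k = j + k + 1 by omega]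
        _ ≤ ((a (j + k + 1) : ℝ))⁻¹ := hrdiff (j + k)
        _ ≤ ((a (k + 1) : ℝ) * A ^ j)⁻¹ := h3
        _ = ((a (k + 1) : ℝ))⁻¹ * (A⁻¹) ^ j := by rw [mul_inv, inv_pow]
    have := dist_le_of_le_geometric_of_tendsto₀ (A⁻¹) (((a (k + 1) : ℝ))⁻¹) hinvA1 hu htend
    simp only [Nat.zero_add, Real.dist_eq] at this
    calc |(a (k + 1) : ℝ) / (a k : ℝ) - α|
        ≤ ((a (k + 1) : ℝ))⁻¹ / (1 - A⁻¹) := by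
          simpa using this
      _ = ((a (k + 1) : ℝ))⁻¹ * (A * (A - 1)⁻¹) := by rw [div_eq_mul_inv, h1A]
  have hak : ∀ k, |(a (k + 1) : ℝ) - α * (a k : ℝ)| ≤ c := by
    intro k
    have e : (a (k + 1) : ℝ) - α * (a k : ℝ)
        = ((a (k + 1) : ℝ) / (a k : ℝ) - α) * (a k : ℝ) := by
      field_simp [ne_of_gt (pos k)]
    have h3 : ((a (k + 1) : ℝ))⁻¹ ≤ (A * (a k : ℝ))⁻¹ :=
      inv_anti₀ (mul_pos hA0 (pos k)) (le_of_lt (ratio k))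
    have e2 : (A * (a k : ℝ))⁻¹ * (A * (A - 1)⁻¹) * (a k : ℝ) = (A - 1)⁻¹ := by
      field_simp
      rw [div_self (ne_of_gt (pos k))]
    calc |(a (k + 1) : ℝ) - α * (a k : ℝ)|
        = |(a (k + 1) : ℝ) / (a k : ℝ) - α| * (a k : ℝ) := by
          rw [e, abs_mul, abs_of_pos (pos k)]
      _ ≤ ((a (k + 1) : ℝ))⁻¹ * (A * (A - 1)⁻¹) * (a k : ℝ) :=
          mul_le_mul_of_nonneg_right (hrk k) (le_of_lt (pos k))
      _ ≤ (A * (a k : ℝ))⁻¹ * (A * (A - 1)⁻¹) * (a k : ℝ) := by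
          apply mul_le_mul_of_nonneg_right _ (le_of_lt (pos k))
          exact mul_le_mul_of_nonneg_right h3 (by positivity)
      _ = c := by rw [e2, hc]
  -- the sequence a n / α^n is Cauchy
  have hαinv0 : (0:ℝ) ≤ α⁻¹ := by positivity
  have hαinv1 : α⁻¹ < 1 := inv_lt_one_of_one_lt₀ hα1
  have hαne : α ≠ 0 := ne_of_gt hαpos
  have hugeo : ∀ n : ℕ, dist ((a n : ℝ) * (α⁻¹) ^ n)
      ((a (n + 1) : ℝ) * (α⁻¹) ^ (n + 1)) ≤ (c * α⁻¹) * (α⁻¹) ^ n := by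
    intro n
    rw [dist_comm, Real.dist_eq]
    have e : (a (n + 1) : ℝ) * (α⁻¹) ^ (n + 1) - (a n : ℝ) * (α⁻¹) ^ n
        = ((a (n + 1) : ℝ) - α * (a n : ℝ)) * (α⁻¹) ^ (n + 1) := by
      field_simp
      ring_nf
      rw [mul_inv_cancel₀ hαne]
      ring
    rw [e, abs_mul, abs_of_pos (by positivity : (0:ℝ) < (α⁻¹) ^ (n + 1))]
    calc |(a (n + 1) : ℝ) - α * (a n : ℝ)| * (α⁻¹) ^ (n + 1)
        ≤ c * (α⁻¹) ^ (n + 1) :=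
          mul_le_mul_of_nonneg_right (hak n) (by positivity)
      _ = (c * α⁻¹) * (α⁻¹) ^ n := by rw [pow_succ]; ring
  have hcauchy2 : CauchySeq (fun n : ℕ => (a n : ℝ) * (α⁻¹) ^ n) :=
    cauchySeq_of_le_geometric _ _ hαinv1 hugeo
  obtain ⟨lam, hlam⟩ := cauchySeq_tendsto_of_complete hcauchy2
  have hbound : ∀ n, |(a n : ℝ) * (α⁻¹) ^ n - lam| ≤ c * (α - 1)⁻¹ * (α⁻¹) ^ n := by
    intro n
    have h := dist_le_of_le_geometric_of_tendsto (α⁻¹) (c * α⁻¹) hαinv1 hugeo hlam n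
    rw [Real.dist_eq] at h
    have e : (c * α⁻¹) * (α⁻¹) ^ n / (1 - α⁻¹) = c * (α - 1)⁻¹ * (α⁻¹) ^ n := by
      rw [show (1:ℝ) - α⁻¹ = (α - 1) / α by field_simp]
      field_simp
    rw [e] at h
    exact h
  have habs : ∀ n, |(a n : ℝ) - lam * α ^ n| ≤ c * (α - 1)⁻¹ := by
    intro n
    have h := hbound n
    have e : (a n : ℝ) - lam * α ^ n = ((a n : ℝ) * (α⁻¹) ^ n - lam) * α ^ n := by
      rw [inv_pow]
      field_simp
    have hpow : (0:ℝ) < α ^ n := by positivity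
    rw [e, abs_mul, abs_of_pos hpow]
    calc |(a n : ℝ) * (α⁻¹) ^ n - lam| * α ^ n
        ≤ c * (α - 1)⁻¹ * (α⁻¹) ^ n * α ^ n :=
          mul_le_mul_of_nonneg_right h (le_of_lt hpow)
      _ = c * (α - 1)⁻¹ := by
          rw [inv_pow]
          field_simp
  have hc2 : c ≤ 1 / 2 := by
    rw [hc, show (1:ℝ) / 2 = (2:ℝ)⁻¹ by norm_num]
    exact inv_anti₀ (by norm_num) (by linarith)
  have hα2 : (α - 1)⁻¹ ≤ 1 / 2 := by
    rw [show (1:ℝ) / 2 = (2:ℝ)⁻¹ by norm_num]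
    exact inv_anti₀ (by norm_num) (by linarith)
  have hquarter : c * (α - 1)⁻¹ ≤ 1 / 4 := by
    nlinarith [hc0.le, (inv_pos.mpr hαsub).le]
  have hlampos : 0 < lam := by
    have h0 := habs 0
    rw [pow_zero, mul_one] at h0
    have := abs_le.mp h0
    linarith [this.1, this.2]
  have htend2 : Tendsto (fun n : ℕ => (a n : ℝ) * α ^ (-(n : ℤ))) atTop (nhds lam) := by
    have e : (fun n : ℕ => (a n : ℝ) * α ^ (-(n : ℤ)))
        = fun n : ℕ => (a n : ℝ) * (α⁻¹) ^ n := by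
      funext n
      rw [zpow_neg, zpow_natCast, inv_pow]
    rw [e]
    exact hlam
  have hround : ∀ n, round (lam * α ^ n) = a n := by
    intro n
    have h := habs n
    have hy : |lam * α ^ n - (a n : ℝ)| ≤ 1 / 4 := by
      rw [abs_sub_comm]
      linarith [habs n, hquarter]
    have hy' := abs_le.mp hy
    rw [show lam * α ^ n = ((a n : ℤ) : ℝ) + (lam * α ^ n - (a n : ℝ)) by ring,
      round_intCast_add]
    have h0 : round (lam * α ^ n - ((a n : ℤ) : ℝ)) = 0 := by
      rw [round_eq_zero_iff]
      constructor
      · push_cast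
        linarith [hy'.1]
      · push_cast
        linarith [hy'.2]
    rw [h0, add_zero]
  have hdist : ∀ n, distNearestInt (lam * α ^ n) ≤ c * (α - 1)⁻¹ := by
    intro n
    unfold distNearestInt
    rw [hround n, abs_sub_comm]
    exact habs n
  exact ⟨α, lam, hα, hαA, hαB, hlampos, htend2, fun n => ⟨habs n, hdist n⟩⟩
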